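/- For all z ∈ ℝ and all x ∈ ℝ, the Stein solution derivative satisfies |f_z'(x)| ≤ 1, where f_z solves f'(x) - x f(x) = 1_{x ≤ z} - Φ(z). -/

import Mathlib

open MeasureTheory Real

noncomputable def stdPhi (x : ℝ) : ℝ :=
  (Real.sqrt (2 * Real.pi))⁻¹ * ∫ u in Set.Iic x, Real.exp (-u ^ 2 / 2)

noncomputable def steinF (z x : ℝ) : ℝ :=
  if x ≤ z then Real.sqrt (2 * Real.pi) * Real.exp (x ^ 2 / 2) * stdPhi x * (1 - stdPhi z)
  else Real.sqrt (2 * Real.pi) * Real.exp (x ^ 2 / 2) * (1 - stdPhi x) * stdPhi z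

open Set Filter


lemma gauss_int : Integrable (fun u : ℝ => Real.exp (-u ^ 2 / 2)) := by
  have h := integrable_exp_neg_mul_sq (b := (1:ℝ)/2) (by norm_num)
  convert h using 2 with u
  ring_nf

lemma gauss_total : ∫ u : ℝ, Real.exp (-u ^ 2 / 2) = Real.sqrt (2 * Real.pi) := by
  have h := integral_gaussian (1/2 : ℝ)
  rw [show Real.pi / (1/2 : ℝ) = 2 * Real.pi by ring] at h
  rw [← h]
  congr 1 with u
  ring_nf

lemma gauss_Iic_pos (x : ℝ) : 0 < ∫ u in Iic x, Real.exp (-u ^ 2 / 2) := by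
  rw [setIntegral_pos_iff_support_of_nonneg_ae
    (Filter.Eventually.of_forall fun u => (Real.exp_pos _).le) gauss_int.integrableOn]
  have : Function.support (fun u : ℝ => Real.exp (-u ^ 2 / 2)) = Set.univ := by
    ext u; simp [Function.mem_support, (Real.exp_pos _).ne']
  rw [this, Set.univ_inter]
  simp [Real.volume_Iic]

lemma gauss_Ioi_pos (x : ℝ) : 0 < ∫ u in Ioi x, Real.exp (-u ^ 2 / 2) := by
  rw [setIntegral_pos_iff_support_of_nonneg_ae
    (Filter.Eventually.of_forall fun u => (Real.exp_pos _).le) gauss_int.integrableOn]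
  have : Function.support (fun u : ℝ => Real.exp (-u ^ 2 / 2)) = Set.univ := by
    ext u; simp [Function.mem_support, (Real.exp_pos _).ne']
  rw [this, Set.univ_inter]
  simp [Real.volume_Ioi]

lemma gauss_split (x : ℝ) :
    (∫ u in Iic x, Real.exp (-u ^ 2 / 2)) + (∫ u in Ioi x, Real.exp (-u ^ 2 / 2))
      = Real.sqrt (2 * Real.pi) := by
  rw [← gauss_total]
  exact intervalIntegral.integral_Iic_add_Ioi gauss_int.integrableOn gauss_int.integrableOn

lemma gauss_mono {x y : ℝ} (h : x ≤ y) :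
    (∫ u in Iic x, Real.exp (-u ^ 2 / 2)) ≤ ∫ u in Iic y, Real.exp (-u ^ 2 / 2) := by
  apply setIntegral_mono_set gauss_int.integrableOn
    (Filter.Eventually.of_forall fun u => (Real.exp_pos _).le)
  exact HasSubset.Subset.eventuallyLE (Iic_subset_Iic.2 h)

lemma deriv_aux (u : ℝ) :
    HasDerivAt (fun u : ℝ => -Real.exp (-u ^ 2 / 2)) (u * Real.exp (-u ^ 2 / 2)) u := by
  have h1 : HasDerivAt (fun u : ℝ => -u ^ 2 / 2) (-u) u := by
    have := ((hasDerivAt_pow 2 u).neg).div_const 2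
    exact this.congr_deriv (by push_cast; ring)
  have := (h1.exp).neg
  exact this.congr_deriv (by ring)

lemma tendsto_aux : Tendsto (fun u : ℝ => -Real.exp (-u ^ 2 / 2)) atTop (nhds 0) := by
  rw [show (0:ℝ) = -0 by ring]
  apply Filter.Tendsto.neg
  apply Real.tendsto_exp_atBot.comp
  have h : Tendsto (fun u : ℝ => u ^ 2 / 2) atTop atTop :=
    (tendsto_pow_atTop (by norm_num)).atTop_div_const (by norm_num)
  have h2 := Filter.tendsto_neg_atBot_iff.mpr h
  convert h2 using 2 with u
  ring

lemma gauss_tail {s : ℝ} (hs : 0 ≤ s) :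
    ∫ u in Ioi s, u * Real.exp (-u ^ 2 / 2) = Real.exp (-s ^ 2 / 2) := by
  have := integral_Ioi_of_hasDerivAt_of_nonneg' (a := s) (l := 0)
    (g := fun u : ℝ => -Real.exp (-u ^ 2 / 2))
    (g' := fun u : ℝ => u * Real.exp (-u ^ 2 / 2))
    (fun u _ => deriv_aux u)
    (fun u hu => mul_nonneg (le_trans hs hu.le) (Real.exp_pos _).le) tendsto_aux
  rw [this]; ring

lemma gauss_tail_int {s : ℝ} (hs : 0 ≤ s) :
    IntegrableOn (fun u : ℝ => u * Real.exp (-u ^ 2 / 2)) (Ioi s) :=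
  integrableOn_Ioi_deriv_of_nonneg' (fun u _ => deriv_aux u)
    (fun u hu => mul_nonneg (le_trans hs hu.le) (Real.exp_pos _).le) tendsto_aux

lemma mills_right {s : ℝ} (hs : 0 < s) :
    (∫ u in Ioi s, Real.exp (-u ^ 2 / 2)) ≤ Real.exp (-s ^ 2 / 2) / s := by
  have hmono : (∫ u in Ioi s, Real.exp (-u ^ 2 / 2))
      ≤ ∫ u in Ioi s, (u * Real.exp (-u ^ 2 / 2)) / s := by
    apply setIntegral_mono_on gauss_int.integrableOn
      ((gauss_tail_int hs.le).div_const s) measurableSet_Ioi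
    intro u hu
    rw [le_div_iff₀ hs]
    have := (Real.exp_pos (-u ^ 2 / 2)).le
    nlinarith [mem_Ioi.mp hu]
  rw [integral_div, gauss_tail hs.le] at hmono
  exact hmono

lemma mills_left {x : ℝ} (hx : x < 0) :
    (∫ u in Iic x, Real.exp (-u ^ 2 / 2)) ≤ Real.exp (-x ^ 2 / 2) / (-x) := by
  have key : (∫ u in Iic x, Real.exp (-u ^ 2 / 2))
      = ∫ u in Ioi (-x), Real.exp (-u ^ 2 / 2) := by
    rw [← integral_comp_neg_Iic]
    congr 1 with u
    ring_nf
  rw [key]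
  have := mills_right (neg_pos.mpr hx)
  simpa using this

lemma sqrt_two_pi_pos : 0 < Real.sqrt (2 * Real.pi) :=
  Real.sqrt_pos.mpr (by positivity)

lemma stdPhi_pos (x : ℝ) : 0 < stdPhi x :=
  mul_pos (inv_pos.mpr sqrt_two_pi_pos) (gauss_Iic_pos x)

lemma sqrt_mul_stdPhi (x : ℝ) :
    Real.sqrt (2 * Real.pi) * stdPhi x = ∫ u in Iic x, Real.exp (-u ^ 2 / 2) := by
  unfold stdPhi
  rw [← mul_assoc, mul_inv_cancel₀ sqrt_two_pi_pos.ne', one_mul]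

lemma sqrt_mul_one_sub_stdPhi (x : ℝ) :
    Real.sqrt (2 * Real.pi) * (1 - stdPhi x) = ∫ u in Ioi x, Real.exp (-u ^ 2 / 2) := by
  have h := gauss_split x
  have h2 := sqrt_mul_stdPhi x
  rw [mul_sub, mul_one, h2]
  linarith

lemma stdPhi_lt_one (x : ℝ) : stdPhi x < 1 := by
  have h := sqrt_mul_one_sub_stdPhi x
  have h2 := gauss_Ioi_pos x
  nlinarith [sqrt_two_pi_pos]

lemma stdPhi_mono {x y : ℝ} (h : x ≤ y) : stdPhi x ≤ stdPhi y := by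
  unfold stdPhi
  exact mul_le_mul_of_nonneg_left (gauss_mono h) (inv_pos.mpr sqrt_two_pi_pos).le

lemma millsR {x : ℝ} (hx : 0 < x) :
    x * (Real.sqrt (2 * Real.pi) * Real.exp (x ^ 2 / 2) * (1 - stdPhi x)) ≤ 1 := by
  have h : Real.sqrt (2 * Real.pi) * (1 - stdPhi x) ≤ Real.exp (-x ^ 2 / 2) / x := by
    rw [sqrt_mul_one_sub_stdPhi]; exact mills_right hx
  have he : Real.exp (x ^ 2 / 2) * Real.exp (-x ^ 2 / 2) = 1 := by
    rw [← Real.exp_add]; ring_nf; exact Real.exp_zero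
  have hep := Real.exp_pos (x ^ 2 / 2)
  calc x * (Real.sqrt (2 * Real.pi) * Real.exp (x ^ 2 / 2) * (1 - stdPhi x))
      = (x * Real.exp (x ^ 2 / 2)) * (Real.sqrt (2 * Real.pi) * (1 - stdPhi x)) := by ring
    _ ≤ (x * Real.exp (x ^ 2 / 2)) * (Real.exp (-x ^ 2 / 2) / x) := by
        apply mul_le_mul_of_nonneg_left h (by positivity)
    _ = Real.exp (x ^ 2 / 2) * Real.exp (-x ^ 2 / 2) * (x / x) := by ring
    _ = 1 := by rw [div_self hx.ne', he, mul_one]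

lemma millsL {x : ℝ} (hx : x < 0) :
    (-x) * (Real.sqrt (2 * Real.pi) * Real.exp (x ^ 2 / 2) * stdPhi x) ≤ 1 := by
  have h : Real.sqrt (2 * Real.pi) * stdPhi x ≤ Real.exp (-x ^ 2 / 2) / (-x) := by
    rw [sqrt_mul_stdPhi]; exact mills_left hx
  have he : Real.exp (x ^ 2 / 2) * Real.exp (-x ^ 2 / 2) = 1 := by
    rw [← Real.exp_add]; ring_nf; exact Real.exp_zero
  have hep := Real.exp_pos (x ^ 2 / 2)
  have hnx : (0:ℝ) < -x := neg_pos.mpr hx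
  calc (-x) * (Real.sqrt (2 * Real.pi) * Real.exp (x ^ 2 / 2) * stdPhi x)
      = ((-x) * Real.exp (x ^ 2 / 2)) * (Real.sqrt (2 * Real.pi) * stdPhi x) := by ring
    _ ≤ ((-x) * Real.exp (x ^ 2 / 2)) * (Real.exp (-x ^ 2 / 2) / (-x)) := by
        apply mul_le_mul_of_nonneg_left h (by positivity)
    _ = Real.exp (x ^ 2 / 2) * Real.exp (-x ^ 2 / 2) * ((-x) / (-x)) := by ring
    _ = 1 := by rw [div_self hnx.ne', he, mul_one]

theorem steinF_deriv_global_bound (z x : ℝ) :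
    |x * steinF z x + (if x ≤ z then (1 : ℝ) else 0) - stdPhi z| ≤ 1 := by
  have hPz := stdPhi_pos z
  have hPz1 := stdPhi_lt_one z
  have hPx := stdPhi_pos x
  have hPx1 := stdPhi_lt_one x
  have hce : (0:ℝ) < Real.sqrt (2 * Real.pi) * Real.exp (x ^ 2 / 2) := by
    have := sqrt_two_pi_pos; positivity
  rw [abs_le]
  unfold steinF
  by_cases hxz : x ≤ z
  · simp only [if_pos hxz]
    have hmono := stdPhi_mono hxz
    have hlow : 0 ≤ 1 + x * (Real.sqrt (2 * Real.pi) * Real.exp (x ^ 2 / 2) * stdPhi x) := by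
      rcases le_or_gt 0 x with h | h
      · nlinarith [mul_nonneg h (mul_nonneg hce.le hPx.le)]
      · nlinarith [millsL h]
    constructor
    · nlinarith [mul_nonneg hlow (by linarith : (0:ℝ) ≤ 1 - stdPhi z)]
    · rcases le_or_gt x 0 with h | h
      · nlinarith [mul_nonneg (mul_nonneg (neg_nonneg.mpr h) (mul_nonneg hce.le hPx.le))
          (by linarith : (0:ℝ) ≤ 1 - stdPhi z)]
      · have hm := millsR h
        have hxce : 0 ≤ x * (Real.sqrt (2 * Real.pi) * Real.exp (x ^ 2 / 2) * stdPhi x) :=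
          mul_nonneg h.le (mul_nonneg hce.le hPx.le)
        nlinarith [mul_le_mul_of_nonneg_right hm hPx.le,
          mul_le_mul_of_nonneg_left hmono hxce]
  · simp only [if_neg hxz]
    push_neg at hxz
    have hmono := stdPhi_mono hxz.le
    have hup : x * (Real.sqrt (2 * Real.pi) * Real.exp (x ^ 2 / 2) * (1 - stdPhi x)) ≤ 1 := by
      rcases le_or_gt x 0 with h | h
      · nlinarith [mul_nonneg (neg_nonneg.mpr h)
          (mul_nonneg hce.le (by linarith : (0:ℝ) ≤ 1 - stdPhi x))]
      · exact millsR h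
    constructor
    · rcases le_or_gt 0 x with h | h
      · have hxb : 0 ≤ x * (Real.sqrt (2 * Real.pi) * Real.exp (x ^ 2 / 2) * (1 - stdPhi x)) :=
          mul_nonneg h (mul_nonneg hce.le (by linarith))
        nlinarith [mul_le_mul_of_nonneg_right hPz1.le (by linarith : (0:ℝ) ≤
          1 - x * (Real.sqrt (2 * Real.pi) * Real.exp (x ^ 2 / 2) * (1 - stdPhi x)))]
      · have hl := millsL h
        have hxb : x * (Real.sqrt (2 * Real.pi) * Real.exp (x ^ 2 / 2) * (1 - stdPhi x)) ≤ 0 :=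
          mul_nonpos_of_nonpos_of_nonneg h.le (mul_nonneg hce.le (by linarith))
        nlinarith [mul_le_mul_of_nonneg_right hl (by linarith : (0:ℝ) ≤ 1 - stdPhi x),
          mul_le_mul_of_nonneg_right hmono (by linarith : (0:ℝ) ≤
            1 - x * (Real.sqrt (2 * Real.pi) * Real.exp (x ^ 2 / 2) * (1 - stdPhi x)))]
    · nlinarith [mul_le_mul_of_nonneg_right hup hPz.le]
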